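/- Let T : ℝ^m → ℝ^m have a fixed point w* and suppose T is differentiable at w*, with the Jacobian of T at w* having (complex) eigenvalues λ_1, ..., λ_m, each with real part strictly less than 1. Then there exist ρ ∈ (0, 1) and an open set U containing w* such that for any initial point w^0 ∈ U, the iterates w^{k+1} = (1 − ρ) w^k + ρ T(w^k) converge to w*. -/

import Mathlib

open Filter Finset

/-- If some power of the derivative at a fixed point has operator norm `< 1`, then the
fixed point is locally attracting. -/
lemma mann_aux_attract {E : Type*} [NormedAddCommGroup E] [NormedSpace ℝ E]
    (S : E → E) (p : E) (hSp : S p = p) (L : E →L[ℝ] E)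
    (hd : HasFDerivAt S L p) (N : ℕ) (hN : 0 < N) (hLN : ‖L ^ N‖ < 1) :
    ∃ U : Set E, IsOpen U ∧ p ∈ U ∧ ∀ w : ℕ → E, w 0 ∈ U → (∀ k, w (k + 1) = S (w k)) →
      Filter.Tendsto w Filter.atTop (nhds p) := by
  set c : ℝ := max ‖L ^ N‖ 2⁻¹ with hc_def
  have hc0 : 0 < c := lt_max_of_lt_right (by norm_num)
  have hc1 : c < 1 := max_lt hLN (by norm_num)
  have hLc : ‖L ^ N‖ ≤ c := le_max_left _ _
  set θ : ℝ := c ^ ((N : ℝ)⁻¹) with hθ_def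
  have hθ0 : 0 < θ := Real.rpow_pos_of_pos hc0 _
  have hθ1 : θ < 1 := Real.rpow_lt_one hc0.le hc1 (by positivity)
  have hθN : θ ^ N = c := Real.rpow_inv_natCast_pow hc0.le hN.ne'
  -- the adapted norm
  set Nf : E → ℝ := fun x => ∑ i ∈ Finset.range N, θ⁻¹ ^ i * ‖(L ^ i) x‖ with hNf_def
  have hNf_nonneg : ∀ x, 0 ≤ Nf x := fun x =>
    Finset.sum_nonneg fun i _ => mul_nonneg (by positivity) (norm_nonneg _)
  have hNf_zero : Nf 0 = 0 := by simp [hNf_def]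
  have h_le_Nf : ∀ x, ‖x‖ ≤ Nf x := by
    intro x
    have h0 : θ⁻¹ ^ 0 * ‖(L ^ 0) x‖ = ‖x‖ := by simp
    calc ‖x‖ = θ⁻¹ ^ 0 * ‖(L ^ 0) x‖ := h0.symm
    _ ≤ Nf x := Finset.single_le_sum (f := fun i => θ⁻¹ ^ i * ‖(L ^ i) x‖)
        (fun i _ => mul_nonneg (by positivity) (norm_nonneg _))
        (Finset.mem_range.2 hN)
  set C : ℝ := (∑ i ∈ Finset.range N, θ⁻¹ ^ i * ‖L ^ i‖) + 1 with hC_def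
  have hC0 : 0 < C := by
    have h : 0 ≤ ∑ i ∈ Finset.range N, θ⁻¹ ^ i * ‖L ^ i‖ :=
      Finset.sum_nonneg fun i _ => mul_nonneg (by positivity) (norm_nonneg _)
    rw [hC_def]; linarith
  have hNf_le : ∀ x, Nf x ≤ C * ‖x‖ := by
    intro x
    have : Nf x ≤ ∑ i ∈ Finset.range N, θ⁻¹ ^ i * (‖L ^ i‖ * ‖x‖) :=
      Finset.sum_le_sum fun i _ => by
        have := (L ^ i).le_opNorm x
        have h1 : (0:ℝ) ≤ θ⁻¹ ^ i := by positivity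
        nlinarith
    calc Nf x ≤ ∑ i ∈ Finset.range N, θ⁻¹ ^ i * (‖L ^ i‖ * ‖x‖) := this
    _ = (∑ i ∈ Finset.range N, θ⁻¹ ^ i * ‖L ^ i‖) * ‖x‖ := by
        rw [Finset.sum_mul]; congr 1; ext i; ring
    _ ≤ C * ‖x‖ := by
        have := norm_nonneg x
        have : (∑ i ∈ Finset.range N, θ⁻¹ ^ i * ‖L ^ i‖) ≤ C := by simp [hC_def]
        nlinarith [norm_nonneg x]
  have hNf_add : ∀ x y, Nf (x + y) ≤ Nf x + Nf y := by
    intro x y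
    rw [hNf_def]
    simp only
    rw [← Finset.sum_add_distrib]
    refine Finset.sum_le_sum fun i _ => ?_
    have h1 : (0:ℝ) ≤ θ⁻¹ ^ i := by positivity
    have h2 : ‖(L ^ i) (x + y)‖ ≤ ‖(L ^ i) x‖ + ‖(L ^ i) y‖ := by
      rw [map_add]; exact norm_add_le _ _
    nlinarith
  have hNf_cont : Continuous Nf := by
    refine continuous_finset_sum _ fun i _ => ?_
    exact continuous_const.mul ((L ^ i).continuous.norm)
  -- contraction estimate for the linear part
  have hNfL : ∀ x, Nf (L x) ≤ θ * Nf x := by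
    intro x
    set g : ℕ → ℝ := fun j => θ⁻¹ ^ j * ‖(L ^ j) x‖ with hg_def
    have hstep : ∀ i, θ⁻¹ ^ i * ‖(L ^ i) (L x)‖ = θ * g (i + 1) := by
      intro i
      have hLpow : (L ^ (i + 1)) x = (L ^ i) (L x) := by
        rw [pow_succ]; rfl
      rw [hg_def]
      simp only [hLpow]
      rw [pow_succ]
      field_simp
    have hNfLx : Nf (L x) = θ * ∑ i ∈ Finset.range N, g (i + 1) := by
      rw [hNf_def]
      simp only
      rw [Finset.mul_sum]
      exact Finset.sum_congr rfl fun i _ => hstep i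
    have hsum : ∑ i ∈ Finset.range N, g (i + 1) = Nf x + g N - g 0 := by
      have h1 : ∑ i ∈ Finset.range (N + 1), g i = (∑ i ∈ Finset.range N, g (i + 1)) + g 0 :=
        Finset.sum_range_succ' g N
      have h2 : ∑ i ∈ Finset.range (N + 1), g i = (∑ i ∈ Finset.range N, g i) + g N :=
        Finset.sum_range_succ g N
      have h3 : (Nf x : ℝ) = ∑ i ∈ Finset.range N, g i := rfl
      linarith
    have hgN : g N ≤ g 0 := by
      have h1 : ‖(L ^ N) x‖ ≤ c * ‖x‖ := by
        calc ‖(L ^ N) x‖ ≤ ‖L ^ N‖ * ‖x‖ := (L ^ N).le_opNorm x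
        _ ≤ c * ‖x‖ := by nlinarith [norm_nonneg x]
      have h2 : θ⁻¹ ^ N * c = 1 := by
        rw [← hθN, ← mul_pow, inv_mul_cancel₀ hθ0.ne', one_pow]
      have h3 : (0:ℝ) ≤ θ⁻¹ ^ N := by positivity
      calc g N = θ⁻¹ ^ N * ‖(L ^ N) x‖ := rfl
      _ ≤ θ⁻¹ ^ N * (c * ‖x‖) := by nlinarith
      _ = (θ⁻¹ ^ N * c) * ‖x‖ := by ring
      _ = ‖x‖ := by rw [h2, one_mul]
      _ = g 0 := by simp [hg_def]
    calc Nf (L x) = θ * ∑ i ∈ Finset.range N, g (i + 1) := hNfLx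
    _ ≤ θ * Nf x := by
        rw [hsum]
        nlinarith [hNf_nonneg x]
  clear_value Nf
  clear hNf_def
  clear_value C
  clear hC_def
  clear_value θ
  clear hθ_def hθN
  clear_value c
  clear hc_def hLc hLN
  -- use differentiability
  set q : ℝ := (1 + θ) / 2 with hq_def
  have hq0 : 0 < q := by positivity
  have hθq : θ < q := by rw [hq_def]; linarith
  have hq1 : q < 1 := by rw [hq_def]; linarith
  set ε : ℝ := (q - θ) / C with hε_def
  have hε0 : 0 < ε := div_pos (by linarith) hC0
  have hCε : ∀ r : ℝ, C * (ε * r) = (q - θ) * r := by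
    intro r; rw [hε_def, ← mul_assoc, mul_div_cancel₀ _ hC0.ne']
  clear_value q ε
  clear hq_def hε_def
  have hlittle := hd.isLittleO.def hε0
  rw [Metric.eventually_nhds_iff] at hlittle
  obtain ⟨δ, hδ0, hδ⟩ := hlittle
  -- the open set
  refine ⟨{w | Nf (w - p) < δ}, ?_, ?_, ?_⟩
  · exact isOpen_lt (hNf_cont.comp (continuous_id.sub continuous_const)) continuous_const
  · simpa [hNf_zero] using hδ0
  · intro w hw0 hwrec
    -- one-step estimate
    have hkey : ∀ v : E, Nf (v - p) < δ → Nf (S v - p) ≤ q * Nf (v - p) := by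
      intro v hv
      have hdist : dist v p < δ := by
        rw [dist_eq_norm]
        exact lt_of_le_of_lt (h_le_Nf _) hv
      have herr : ‖S v - S p - L (v - p)‖ ≤ ε * ‖v - p‖ := hδ hdist
      have hsplit : S v - p = L (v - p) + (S v - S p - L (v - p)) := by
        rw [hSp]; abel
      calc Nf (S v - p) = Nf (L (v - p) + (S v - S p - L (v - p))) := by rw [hsplit]
      _ ≤ Nf (L (v - p)) + Nf (S v - S p - L (v - p)) := hNf_add _ _
      _ ≤ θ * Nf (v - p) + C * ‖S v - S p - L (v - p)‖ := by
          have := hNfL (v - p)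
          have := hNf_le (S v - S p - L (v - p))
          linarith
      _ ≤ θ * Nf (v - p) + C * (ε * ‖v - p‖) :=
          add_le_add le_rfl (mul_le_mul_of_nonneg_left herr hC0.le)
      _ ≤ θ * Nf (v - p) + (q - θ) * Nf (v - p) := by
          refine add_le_add le_rfl ?_
          rw [hCε]
          exact mul_le_mul_of_nonneg_left (h_le_Nf _) (by linarith)
      _ = q * Nf (v - p) := by ring
    have hiter : ∀ k, Nf (w k - p) ≤ q ^ k * Nf (w 0 - p) ∧ Nf (w k - p) < δ := by
      intro k
      induction k with
      | zero => exact ⟨by simp, hw0⟩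
      | succ k ih =>
        obtain ⟨h1, h2⟩ := ih
        have h3 : Nf (w (k + 1) - p) ≤ q * Nf (w k - p) := by
          rw [hwrec k]; exact hkey (w k) h2
        constructor
        · calc Nf (w (k + 1) - p) ≤ q * Nf (w k - p) := h3
          _ ≤ q * (q ^ k * Nf (w 0 - p)) := mul_le_mul_of_nonneg_left h1 hq0.le
          _ = q ^ (k + 1) * Nf (w 0 - p) := by ring
        · calc Nf (w (k + 1) - p) ≤ q * Nf (w k - p) := h3
          _ ≤ 1 * Nf (w k - p) :=
              mul_le_mul_of_nonneg_right hq1.le (hNf_nonneg _)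
          _ = Nf (w k - p) := one_mul _
          _ < δ := h2
    rw [tendsto_iff_dist_tendsto_zero]
    have hbound : ∀ k, dist (w k) p ≤ q ^ k * Nf (w 0 - p) := fun k => by
      rw [dist_eq_norm]
      exact le_trans (h_le_Nf _) (hiter k).1
    have hlim := (tendsto_pow_atTop_nhds_zero_of_lt_one hq0.le hq1).mul_const (Nf (w 0 - p))
    rw [zero_mul] at hlim
    exact squeeze_zero (fun k => dist_nonneg) hbound hlim

/-- Choice of the relaxation parameter `ρ`. -/
lemma mann_aux_rho (K : Set ℂ) (hK : K.Finite) (hre : ∀ μ ∈ K, μ.re < 1) :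
    ∃ ρ : ℝ, 0 < ρ ∧ ρ ≤ 2⁻¹ ∧ ∃ cc : ℝ, 0 ≤ cc ∧ cc < 1 ∧
      ∀ μ ∈ K, ‖1 + (ρ : ℂ) * (μ - 1)‖ ≤ cc := by
  classical
  set Kf : Finset ℂ := insert 0 hK.toFinset with hKf
  have hne : Kf.Nonempty := ⟨0, Finset.mem_insert_self _ _⟩
  have hsub : ∀ μ ∈ K, μ ∈ Kf := fun μ hμ =>
    Finset.mem_insert_of_mem (hK.mem_toFinset.2 hμ)
  have hreKf : ∀ μ ∈ Kf, μ.re < 1 := by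
    intro μ hμ
    rcases Finset.mem_insert.1 hμ with h | h
    · simp [h]
    · exact hre μ (hK.mem_toFinset.1 h)
  set a0 : ℝ := Kf.sup' hne (fun μ => μ.re) with ha0_def
  have ha0lt : a0 < 1 := (Finset.sup'_lt_iff hne).2 hreKf
  have ha0mem : ∀ μ ∈ Kf, μ.re ≤ a0 := fun μ hμ => Finset.le_sup' _ hμ
  set C : ℝ := Kf.sup' hne (fun μ => ‖μ - 1‖ ^ 2) with hC_def
  have hCmem : ∀ μ ∈ Kf, ‖μ - 1‖ ^ 2 ≤ C := fun μ hμ =>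
    Finset.le_sup' (f := fun μ => ‖μ - 1‖ ^ 2) hμ
  obtain ⟨μ0, hμ0mem, hμ0⟩ := Finset.exists_mem_eq_sup' hne (fun μ => μ.re)
  have hC1 : (1 - a0) ^ 2 ≤ C := by
    have h := hCmem μ0 hμ0mem
    have habs : |(μ0 - 1).re| ≤ ‖μ0 - 1‖ := by
      exact Complex.abs_re_le_norm _
    have hsq : ((μ0 - 1).re) ^ 2 ≤ ‖μ0 - 1‖ ^ 2 := by
      nlinarith [abs_nonneg (μ0 - 1).re, norm_nonneg (μ0 - 1), abs_le.1 habs,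
        sq_abs (μ0 - 1).re]
    have hre0 : (μ0 - 1).re = a0 - 1 := by
      rw [Complex.sub_re, Complex.one_re, ← hμ0]
    nlinarith [hsq, h]
  have hCpos : 0 < C := lt_of_lt_of_le (by nlinarith) hC1
  refine ⟨min 2⁻¹ ((1 - a0) / C), lt_min (by norm_num) (div_pos (by linarith) hCpos),
    min_le_left _ _, ?_⟩
  set ρ : ℝ := min 2⁻¹ ((1 - a0) / C) with hρ_def
  have hρ0 : 0 < ρ := lt_min (by norm_num) (div_pos (by linarith) hCpos)
  have hρC : ρ * C ≤ 1 - a0 := by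
    have h := min_le_right 2⁻¹ ((1 - a0) / C)
    rw [← hρ_def] at h
    calc ρ * C ≤ (1 - a0) / C * C := by nlinarith
    _ = 1 - a0 := by field_simp
  have harg0 : 0 ≤ 1 - ρ * (1 - a0) := by
    nlinarith [mul_pos hρ0 (show (0:ℝ) < 1 - a0 by linarith)]
  refine ⟨Real.sqrt (1 - ρ * (1 - a0)), Real.sqrt_nonneg _, ?_, ?_⟩
  · nlinarith [Real.sq_sqrt harg0, Real.sqrt_nonneg (1 - ρ * (1 - a0)),
      mul_pos hρ0 (show (0:ℝ) < 1 - a0 by linarith)]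
  · intro μ hμK
    have hμ := hsub μ hμK
    have hμa : μ.re ≤ a0 := ha0mem μ hμ
    have hμC : (μ.re - 1) ^ 2 + μ.im ^ 2 ≤ C := by
      have h := hCmem μ hμ
      have : ‖μ - 1‖ ^ 2 = (μ.re - 1) ^ 2 + μ.im ^ 2 := by
        rw [Complex.sq_norm, Complex.normSq_apply]
        simp [Complex.sub_re, Complex.sub_im]
        ring
      linarith [this ▸ h]
    have hnorm : ‖1 + (ρ : ℂ) * (μ - 1)‖ ^ 2 = (1 + ρ * (μ.re - 1)) ^ 2 + (ρ * μ.im) ^ 2 := by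
      rw [Complex.sq_norm, Complex.normSq_apply]
      simp [Complex.add_re, Complex.add_im, Complex.mul_re, Complex.mul_im,
        Complex.sub_re, Complex.sub_im]
      ring
    have hkey : ‖1 + (ρ : ℂ) * (μ - 1)‖ ^ 2 ≤ 1 - ρ * (1 - a0) := by
      rw [hnorm]
      nlinarith [mul_le_mul_of_nonneg_left hμC (mul_pos hρ0 hρ0).le,
        mul_le_mul_of_nonneg_left hρC hρ0.le,
        mul_le_mul_of_nonneg_left hμa hρ0.le, hρ0.le]
    nlinarith [Real.sq_sqrt harg0, Real.sqrt_nonneg (1 - ρ * (1 - a0)),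
      norm_nonneg (1 + (ρ : ℂ) * (μ - 1)), hkey]

/-- Spectrum of the averaged matrix. -/
lemma mann_aux_srad {m : ℕ} (Aℂ : Matrix (Fin m) (Fin m) ℂ) (ρ : ℝ) (hρ0 : 0 < ρ)
    (cc : ℝ) (hccb : ∀ μ ∈ spectrum ℂ Aℂ, ‖1 + (ρ : ℂ) * (μ - 1)‖ ≤ cc) :
    ∀ ν ∈ spectrum ℂ ((1 - (ρ : ℂ)) • (1 : Matrix (Fin m) (Fin m) ℂ) + (ρ : ℂ) • Aℂ),
      ‖ν‖ ≤ cc := by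
  intro ν hν
  have hρne : (ρ : ℂ) ≠ 0 := by
    simpa using hρ0.ne'
  set μ : ℂ := (ν - (1 - ρ)) / ρ with hμ_def
  have hρμ : (ρ : ℂ) * μ = ν - (1 - ρ) := by
    rw [hμ_def, mul_div_cancel₀ _ hρne]
  have heqm : algebraMap ℂ _ ν - ((1 - (ρ : ℂ)) • 1 + (ρ : ℂ) • Aℂ) =
      (ρ : ℂ) • (algebraMap ℂ (Matrix (Fin m) (Fin m) ℂ) μ - Aℂ) := by
    rw [Algebra.algebraMap_eq_smul_one, Algebra.algebraMap_eq_smul_one, smul_sub,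
      smul_smul, hρμ, sub_smul]
    module
  have hμspec : μ ∈ spectrum ℂ Aℂ := by
    rw [spectrum.mem_iff] at hν ⊢
    intro hu
    apply hν
    rw [heqm, Algebra.smul_def]
    exact ((isUnit_iff_ne_zero.mpr hρne).map (algebraMap ℂ (Matrix (Fin m) (Fin m) ℂ))).mul hu
  have hν_eq : ν = 1 + (ρ : ℂ) * (μ - 1) := by
    rw [mul_sub, hρμ]; ring
  rw [hν_eq]
  exact hccb μ hμspec

/-- Theorem 5 of the paper: local convergence of Mann iterates.
Let `T : ℝ^m → ℝ^m` have a fixed point `w*`, suppose `T` is (Fréchet) differentiable at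
`w*` with Jacobian matrix `A`, and suppose every complex eigenvalue of `A` has real part
strictly less than `1`.  Then there are `ρ ∈ (0,1)` and an open set `U ∋ w*` such that for
every initial point `w 0 ∈ U` the Mann iterates `w (k+1) = (1 − ρ) • w k + ρ • T (w k)`
converge to `w*`. -/
theorem mann_local_convergence {m : ℕ}
    (T : EuclideanSpace ℝ (Fin m) → EuclideanSpace ℝ (Fin m))
    (wstar : EuclideanSpace ℝ (Fin m)) (hfix : T wstar = wstar)
    (A : Matrix (Fin m) (Fin m) ℝ)
    (hderiv : HasFDerivAt T
      (LinearMap.toContinuousLinearMap (Matrix.toEuclideanLin A)) wstar)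
    (heig : ∀ μ ∈ spectrum ℂ (A.map fun x => (x : ℂ)), μ.re < 1) :
    ∃ ρ ∈ Set.Ioo (0:ℝ) 1, ∃ U : Set (EuclideanSpace ℝ (Fin m)),
      IsOpen U ∧ wstar ∈ U ∧
        ∀ w : ℕ → EuclideanSpace ℝ (Fin m), w 0 ∈ U →
          (∀ k, w (k + 1) = (1 - ρ) • w k + ρ • T (w k)) →
          Filter.Tendsto w Filter.atTop (nhds wstar) := by
  classical
  set Aℂ : Matrix (Fin m) (Fin m) ℂ := A.map fun x => (x : ℂ) with hAℂ_def
  obtain ⟨ρ, hρ0, hρhalf, cc, hcc0, hcc1, hccb⟩ :=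
    mann_aux_rho (spectrum ℂ Aℂ) (Matrix.finite_spectrum Aℂ) heig
  have hρ1 : ρ < 1 := lt_of_le_of_lt hρhalf (by norm_num)
  -- the averaged complex matrix and its spectrum bound
  set Mmat : Matrix (Fin m) (Fin m) ℂ := (1 - (ρ : ℂ)) • 1 + (ρ : ℂ) • Aℂ with hMmat_def
  have hspec_bound := mann_aux_srad Aℂ ρ hρ0 cc hccb
  -- pass to the continuous linear map on complex Euclidean space
  set Mc : EuclideanSpace ℂ (Fin m) →L[ℂ] EuclideanSpace ℂ (Fin m) :=
    Matrix.toEuclideanCLM (𝕜 := ℂ) Mmat with hMc_def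
  have hspec_eq : spectrum ℂ Mc = spectrum ℂ Mmat :=
    AlgEquiv.spectrum_eq (Matrix.toEuclideanCLM (𝕜 := ℂ) (n := Fin m)) Mmat
  have hsr : spectralRadius ℂ Mc ≤ ENNReal.ofReal cc := by
    have hdef : spectralRadius ℂ Mc = ⨆ ν ∈ spectrum ℂ Mc, (‖ν‖₊ : ENNReal) := rfl
    rw [hdef]
    refine iSup₂_le fun ν hν => ?_
    rw [← enorm_eq_nnnorm, ← ofReal_norm]
    exact ENNReal.ofReal_le_ofReal (hspec_bound ν (hspec_eq ▸ hν))
  have hsr1 : spectralRadius ℂ Mc < 1 :=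
    lt_of_le_of_lt hsr (ENNReal.ofReal_lt_one.mpr hcc1)
  -- Gelfand's formula: some power of `Mc` has norm `< 1`
  have hg := spectrum.pow_nnnorm_pow_one_div_tendsto_nhds_spectralRadius Mc
  obtain ⟨N, hNlt, hN1⟩ := ((hg.eventually_lt_const hsr1).and (eventually_ge_atTop 1)).exists
  have hN0 : 0 < N := hN1
  have hMcN : ‖Mc ^ N‖ < 1 := by
    by_contra h
    push_neg at h
    have h1 : (1 : ENNReal) ≤ (‖Mc ^ N‖₊ : ENNReal) := by
      rw [← enorm_eq_nnnorm, ← ofReal_norm]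
      exact ENNReal.one_le_ofReal.mpr h
    have h2 := ENNReal.rpow_le_rpow h1 (by positivity : (0:ℝ) ≤ 1 / (N:ℝ))
    rw [ENNReal.one_rpow] at h2
    exact absurd hNlt (not_lt.mpr h2)
  -- transfer to the real side
  set LA : EuclideanSpace ℝ (Fin m) →L[ℝ] EuclideanSpace ℝ (Fin m) :=
    LinearMap.toContinuousLinearMap (Matrix.toEuclideanLin A) with hLA_def
  set Lr : EuclideanSpace ℝ (Fin m) →L[ℝ] EuclideanSpace ℝ (Fin m) :=
    (1 - ρ) • 1 + ρ • LA with hLr_def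
  set j : EuclideanSpace ℝ (Fin m) → EuclideanSpace ℂ (Fin m) :=
    fun x => WithLp.toLp 2 (fun i => (x i : ℂ)) with hj_def
  have hj_norm : ∀ x, ‖j x‖ = ‖x‖ := by
    intro x
    rw [EuclideanSpace.norm_eq, EuclideanSpace.norm_eq]
    congr 1
    refine Finset.sum_congr rfl fun i _ => ?_
    simp [hj_def, Complex.norm_real]
  have hAcomm : ∀ x, Matrix.toEuclideanCLM (𝕜 := ℂ) Aℂ (j x) = j (LA x) := by
    intro x
    ext i
    show (Matrix.toLin' Aℂ fun k => (x k : ℂ)) i = ((Matrix.toLin' A fun k => x k) i : ℂ)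
    rw [Matrix.toLin'_apply, Matrix.toLin'_apply]
    simp [Matrix.mulVec, dotProduct, hAℂ_def, Matrix.map_apply]
  have hMc_split : Mc = (1 - (ρ : ℂ)) • 1 + (ρ : ℂ) • Matrix.toEuclideanCLM (𝕜 := ℂ) Aℂ := by
    rw [hMc_def, hMmat_def, map_add, map_smul, map_smul, map_one]
  have hcomm : ∀ x, Mc (j x) = j (Lr x) := by
    intro x
    rw [hMc_split]
    ext i
    show (1 - (ρ:ℂ)) * (j x i) + (ρ:ℂ) * (Matrix.toEuclideanCLM (𝕜 := ℂ) Aℂ (j x) i)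
        = ((( (1-ρ) • x + ρ • LA x) i : ℝ) : ℂ)
    rw [hAcomm x]
    show (1 - (ρ:ℂ)) * (x i : ℂ) + (ρ:ℂ) * ((LA x) i : ℂ)
        = (((1-ρ) * x i + ρ * (LA x) i : ℝ) : ℂ)
    push_cast
    ring
  have hpow : ∀ (k : ℕ) (x : EuclideanSpace ℝ (Fin m)), (Mc ^ k) (j x) = j ((Lr ^ k) x) := by
    intro k
    induction k with
    | zero => intro x; simp
    | succ k ih =>
      intro x
      have h1 : (Mc ^ (k + 1)) (j x) = (Mc ^ k) (Mc (j x)) := by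
        rw [pow_succ]; rfl
      have h2 : (Lr ^ (k + 1)) x = (Lr ^ k) (Lr x) := by
        rw [pow_succ]; rfl
      rw [h1, h2, hcomm x, ih (Lr x)]
  have hLrN : ‖Lr ^ N‖ < 1 := by
    have hb : ∀ x, ‖(Lr ^ N) x‖ ≤ ‖Mc ^ N‖ * ‖x‖ := by
      intro x
      rw [← hj_norm ((Lr ^ N) x), ← hpow N x, ← hj_norm x]
      exact (Mc ^ N).le_opNorm (j x)
    exact lt_of_le_of_lt ((Lr ^ N).opNorm_le_bound (norm_nonneg _) hb) hMcN
  -- apply the attraction lemma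
  set S : EuclideanSpace ℝ (Fin m) → EuclideanSpace ℝ (Fin m) :=
    fun w => (1 - ρ) • w + ρ • T w with hS_def
  have hSfix : S wstar = wstar := by
    rw [hS_def]
    show (1 - ρ) • wstar + ρ • T wstar = wstar
    rw [hfix, ← add_smul]
    norm_num
  have hSderiv : HasFDerivAt S Lr wstar := by
    have h1 : HasFDerivAt (fun w : EuclideanSpace ℝ (Fin m) => (1 - ρ) • w)
        ((1 - ρ) • (1 : EuclideanSpace ℝ (Fin m) →L[ℝ] EuclideanSpace ℝ (Fin m))) wstar := by
      have := (hasFDerivAt_id (𝕜 := ℝ) wstar).const_smul (1 - ρ)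
      rw [ContinuousLinearMap.one_def]; exact this
    have h2 : HasFDerivAt (fun w => ρ • T w) (ρ • LA) wstar := hderiv.const_smul ρ
    exact h1.add h2
  obtain ⟨U, hUopen, hUmem, hUconv⟩ := mann_aux_attract S wstar hSfix Lr hSderiv N hN0 hLrN
  exact ⟨ρ, ⟨hρ0, hρ1⟩, U, hUopen, hUmem, fun w hw hrec =>
    hUconv w hw fun k => hrec k⟩
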